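/- For every binary de Bruijn sequence w of order k, sre(w) = 2^k. In particular, sre(w) = Ω(n) where n = 2^k + k − 1 is the length of w. -/

import Mathlib

variable {α : Type*}

/-- `x` is a right-maximal substring of `w`. -/
def RightMaximal (w x : List α) : Prop :=
  ∃ a b : α, a ≠ b ∧ (x ++ [a]) <:+: w ∧ (x ++ [b]) <:+: w

/-- `y` is a right-extension of `w`. -/
def RightExt (w y : List α) : Prop :=
  ∃ (x : List α) (a : α), RightMaximal w x ∧ y = x ++ [a] ∧ y <:+: w

/-- `y` is a supermaximal right-extension of `w`: a right-extension that is not a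
proper suffix of any other right-extension. -/
def Supermaximal (w y : List α) : Prop :=
  RightExt w y ∧ ∀ z, RightExt w z → y <:+ z → z = y

/-- The number of supermaximal right-extensions of `w`. -/
noncomputable def sre (w : List α) : ℕ :=
  {y | Supermaximal w y}.ncard

/-- A binary de Bruijn sequence of order `k`: length `2^k + (k-1)` and every
binary string of length `k` occurs as a substring exactly once. -/
def IsDeBruijn (k : ℕ) (w : List Bool) : Prop :=
  w.length = 2 ^ k + (k - 1) ∧
  ∀ x : List Bool, x.length = k →
    ∃! i : ℕ, i + k ≤ w.length ∧ x = (w.drop i).take k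

-- auxiliary lemmas

lemma infix_occ {u w : List α} (h : u <:+: w) :
    ∃ i, i + u.length ≤ w.length ∧ u = (w.drop i).take u.length := by
  obtain ⟨s, t, rfl⟩ := h
  refine ⟨s.length, by simp, ?_⟩
  rw [List.append_assoc, List.drop_left, List.take_left]

lemma occ_infix {u w : List α} {i : ℕ} (h2 : u = (w.drop i).take u.length) : u <:+: w := by
  rw [h2]
  exact (List.take_prefix _ _).isInfix.trans (List.drop_suffix _ _).isInfix

lemma infix_of_len {k : ℕ} {w : List Bool} (hw : IsDeBruijn k w)
    {x : List Bool} (hx : x.length = k) : x <:+: w := by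
  obtain ⟨i, ⟨hi1, hi2⟩, _⟩ := hw.2 x hx
  subst hx
  exact occ_infix hi2

lemma rm_length {k : ℕ} {w : List Bool} (hw : IsDeBruijn k w)
    {x : List Bool} (hx : RightMaximal w x) : x.length < k := by
  obtain ⟨a, b, hab, ha, hb⟩ := hx
  by_contra h
  push_neg at h
  obtain ⟨i, hi1, hi2⟩ := infix_occ ha
  obtain ⟨j, hj1, hj2⟩ := infix_occ hb
  simp only [List.length_append, List.length_singleton] at hi1 hi2 hj1 hj2
  have hx' : (x.take k).length = k := by simp; omega
  obtain ⟨i0, _, huniq⟩ := hw.2 (x.take k) hx'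
  have key : ∀ (m : ℕ) (c : Bool), m + (x.length + 1) ≤ w.length →
      x ++ [c] = (w.drop m).take (x.length + 1) →
      (m + k ≤ w.length ∧ x.take k = (w.drop m).take k) := by
    intro m c hm1 hm2
    refine ⟨by omega, ?_⟩
    have := congrArg (List.take k) hm2
    rwa [List.take_append_of_le_length h, List.take_take,
      min_eq_left (by omega)] at this
  have hi := huniq i (key i a hi1 hi2)
  have hj := huniq j (key j b hj1 hj2)
  subst hi; subst hj
  have : x ++ [a] = x ++ [b] := hi2.trans hj2.symm
  have := List.append_cancel_left this
  simp at this
  exact hab this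

lemma rext_of_len {k : ℕ} (hk : 0 < k) {w : List Bool} (hw : IsDeBruijn k w)
    {y : List Bool} (hy : y.length = k) : RightExt w y := by
  have hne : y ≠ [] := by intro h; subst h; simp at hy; omega
  refine ⟨y.dropLast, y.getLast hne, ⟨true, false, by simp, ?_, ?_⟩,
    (List.dropLast_append_getLast hne).symm, infix_of_len hw hy⟩ <;>
  · apply infix_of_len hw
    simp [List.length_dropLast, hy]
    omega

lemma rext_len {k : ℕ} {w : List Bool} (hw : IsDeBruijn k w)
    {y : List Bool} (hy : RightExt w y) : y.length ≤ k ∧ y ≠ [] := by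
  obtain ⟨x, a, hm, rfl, _⟩ := hy
  have := rm_length hw hm
  constructor
  · simp; omega
  · simp

lemma super_eq {k : ℕ} (hk : 0 < k) {w : List Bool} (hw : IsDeBruijn k w) :
    {y : List Bool | Supermaximal w y} = {y : List Bool | y.length = k} := by
  ext y
  simp only [Set.mem_setOf_eq]
  constructor
  · rintro ⟨hre, hmax⟩
    obtain ⟨hle, hne⟩ := rext_len hw hre
    by_contra h
    have hlt : y.length < k := lt_of_le_of_ne hle h
    set z := List.replicate (k - y.length) true ++ y with hz
    have hzlen : z.length = k := by simp [hz]; omega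
    have := hmax z (rext_of_len hk hw hzlen) ⟨_, rfl⟩
    have := congrArg List.length this
    rw [hzlen] at this
    omega
  · intro hy
    refine ⟨rext_of_len hk hw hy, fun z hz hsuff => ?_⟩
    have hle := (rext_len hw hz).1
    have := hsuff.length_le
    exact (List.IsSuffix.eq_of_length hsuff (by omega)).symm ▸ rfl

theorem sre_deBruijn (k : ℕ) (hk : 0 < k) (w : List Bool) (hw : IsDeBruijn k w) :
    sre w = 2 ^ k ∧ w.length ≤ 2 * sre w := by
  have hcard : sre w = 2 ^ k := by
    rw [sre, super_eq hk hw]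
    have hrange : {y : List Bool | y.length = k} =
        Set.range (fun f : Fin k → Bool => List.ofFn f) := by
      ext y
      simp only [Set.mem_setOf_eq, Set.mem_range]
      constructor
      · intro hy
        exact ⟨fun i => y.get (Fin.cast hy.symm i), by
          apply List.ext_get (by simp [hy])
          intro n h1 h2
          simp⟩
      · rintro ⟨f, rfl⟩
        simp
    rw [hrange, ← Set.image_univ, Set.ncard_image_of_injective _ List.ofFn_injective,
      Set.ncard_univ, Nat.card_eq_fintype_card]
    simp
  refine ⟨hcard, ?_⟩
  have h2 := Nat.lt_two_pow_self (n := k)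
  rw [hcard, hw.1]
  omega
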